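/- Let n, k ∈ ℕ with 3 ≤ k ≤ n−1, let {D_I}, indexed by the k-subsets I of [n], be an l-treelike family of real numbers, and let U be the set of weighted trees with leaf set [n] realizing the family. If U contains a weighted tree that is not a pseudostar of kind (n,k), then the infimum over 𝒯 ∈ U of D_tot(𝒯) is −∞ and the supremum over 𝒯 ∈ U of D_tot(𝒯) is +∞. -/

import Mathlib

/-- A weighted finite tree with leaf set labelled by `Fin n`:
a finite vertex type `V`, a tree `G` on `V`, an injective labelling `leaf` of the
degree-one vertices by `Fin n` (every vertex of degree one is a labelled leaf),
and a weight function `w` on edges (zero off the edge set). -/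
structure WTree (n : ℕ) where
  V : Type
  fintypeV : Fintype V
  G : SimpleGraph V
  isTree : G.IsTree
  leaf : Fin n → V
  leafInj : Function.Injective leaf
  leafSpec : ∀ v : V, (G.neighborSet v).ncard = 1 ↔ v ∈ Set.range leaf
  w : Sym2 V → ℝ
  wSupport : ∀ e, e ∉ G.edgeSet → w e = 0

namespace WTree

variable {n : ℕ}

/-- The degree of a vertex. -/
noncomputable def deg (T : WTree n) (v : T.V) : ℕ := (T.G.neighborSet v).ncard

/-- A node is a vertex of degree `> 2`. -/
def IsNode (T : WTree n) (v : T.V) : Prop := 2 < T.deg v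

/-- A tree is essential if it has no vertices of degree `2`. -/
def Essential (T : WTree n) : Prop := ∀ v : T.V, T.deg v ≠ 2

/-- The set of edges lying on the path between two vertices. -/
def pathEdges (T : WTree n) (u v : T.V) : Set (Sym2 T.V) :=
  {e | ∃ p : T.G.Walk u v, p.IsPath ∧ e ∈ p.edges}

/-- The edge set of the minimal subtree containing the leaves in `S`. -/
def subtreeEdges (T : WTree n) (S : Set (Fin n)) : Set (Sym2 T.V) :=
  {e | ∃ i ∈ S, ∃ j ∈ S, e ∈ T.pathEdges (T.leaf i) (T.leaf j)}

/-- `D_I(T)`: the weight of the minimal subtree of `T` containing the leaves in `I`. -/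
noncomputable def D (T : WTree n) (I : Finset (Fin n)) : ℝ :=
  ∑ᶠ e ∈ T.subtreeEdges ↑I, T.w e

/-- The total weight of the tree. -/
noncomputable def Dtot (T : WTree n) : ℝ := ∑ᶠ e ∈ T.G.edgeSet, T.w e

/-- An edge is a twig edge if it lies on the path from some leaf to the nearest node. -/
def IsTwigEdge (T : WTree n) (e : Sym2 T.V) : Prop :=
  ∃ (i : Fin n) (v : T.V), T.IsNode v ∧
    ∃ p : T.G.Walk (T.leaf i) v, p.IsPath ∧
      (∀ u ∈ p.support, T.IsNode u → u = v) ∧ e ∈ p.edges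

/-- Internal-nonzero-weighted: every internal (non-twig) edge has nonzero weight. -/
def InternalNonzero (T : WTree n) : Prop :=
  ∀ e ∈ T.G.edgeSet, ¬ T.IsTwigEdge e → T.w e ≠ 0

/-- Positive-weighted: all edge weights are positive. -/
def PositiveWeighted (T : WTree n) : Prop := ∀ e ∈ T.G.edgeSet, 0 < T.w e

/-- The leaves lying on the side of vertex `a` after removing the edge `e`. -/
def sideLeaves (T : WTree n) (e : Sym2 T.V) (a : T.V) : Set (Fin n) :=
  {i | e ∉ T.pathEdges (T.leaf i) a}

/-- A pseudostar of kind `(n, k)`: every edge divides the leaf set into two parts,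
at least one of which has cardinality `≥ k`. -/
def IsPseudostar (T : WTree n) (k : ℕ) : Prop :=
  ∀ a b : T.V, T.G.Adj a b →
    k ≤ (T.sideLeaves s(a, b) a).ncard ∨ k ≤ (T.sideLeaves s(a, b) b).ncard

/-- `T` realizes the family `D₀` of `k`-weights. -/
def Realizes (T : WTree n) (k : ℕ) (D₀ : Finset (Fin n) → ℝ) : Prop :=
  ∀ I : Finset (Fin n), I.card = k → T.D I = D₀ I

/-- Two leaves are neighbours if the path between them contains exactly one node. -/
def Neighbours (T : WTree n) (i j : Fin n) : Prop :=
  i ≠ j ∧ ∃ p : T.G.Walk (T.leaf i) (T.leaf j), p.IsPath ∧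
    ∃! v : T.V, v ∈ p.support ∧ T.IsNode v

/-- The Buneman index `⟨i,j | l,m⟩` holds iff the paths `i–j` and `l–m` are disjoint,
equivalently in `T|_{i,j,l,m}` the leaves `i,j` are neighbours, `l,m` are neighbours
and `i,l` are not neighbours. -/
def Buneman (T : WTree n) (i j l m : Fin n) : Prop :=
  ∀ (p : T.G.Walk (T.leaf i) (T.leaf j)) (q : T.G.Walk (T.leaf l) (T.leaf m)),
    p.IsPath → q.IsPath → ∀ v : T.V, v ∈ p.support → v ∉ q.support

/-- The minimal subtree spanned by the four leaves `i,j,l,m` is a star (i.e. all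
pairwise paths share a common vertex). -/
def StarQuartet (T : WTree n) (i j l m : Fin n) : Prop :=
  ∃ c : T.V, ∀ x ∈ ({i, j, l, m} : Set (Fin n)), ∀ y ∈ ({i, j, l, m} : Set (Fin n)),
    x ≠ y → ∀ p : T.G.Walk (T.leaf x) (T.leaf y), p.IsPath → c ∈ p.support

/-- A cherry: a set of leaves pairwise neighbours. -/
def IsCherry (T : WTree n) (C : Set (Fin n)) : Prop :=
  ∀ i ∈ C, ∀ j ∈ C, i ≠ j → T.Neighbours i j

/-- A complete cherry: a cherry not strictly contained in another cherry. -/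
def IsCompleteCherry (T : WTree n) (C : Set (Fin n)) : Prop :=
  T.IsCherry C ∧ ¬ ∃ C' : Set (Fin n), T.IsCherry C' ∧ C ⊂ C'

/-- A star is a tree with only one node. -/
def IsStar (T : WTree n) : Prop := ∃! v : T.V, T.IsNode v

/-- `x` is the median of the three leaves `a,b,c`: it lies on all three pairwise paths. -/
def IsMedian (T : WTree n) (a b c : Fin n) (x : T.V) : Prop :=
  (∀ p : T.G.Walk (T.leaf a) (T.leaf b), p.IsPath → x ∈ p.support) ∧
  (∀ p : T.G.Walk (T.leaf a) (T.leaf c), p.IsPath → x ∈ p.support) ∧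
  (∀ p : T.G.Walk (T.leaf b) (T.leaf c), p.IsPath → x ∈ p.support)

/-- The weight of the twig associated to the leaf `i` (the path from the leaf to the
nearest node). -/
noncomputable def twigWeight (T : WTree n) (i : Fin n) : ℝ :=
  ∑ᶠ e ∈ {e : Sym2 T.V | ∃ v : T.V, T.IsNode v ∧
      ∃ p : T.G.Walk (T.leaf i) v, p.IsPath ∧
        (∀ u ∈ p.support, T.IsNode u → u = v) ∧ e ∈ p.edges}, T.w e

/-- Two weighted trees with leaf set `Fin n` are equal (isomorphic respecting the
leaf labels and the weights). -/
def Isom (T T' : WTree n) : Prop :=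
  ∃ φ : T.V ≃ T'.V,
    (∀ a b : T.V, T.G.Adj a b ↔ T'.G.Adj (φ a) (φ b)) ∧
    (∀ i : Fin n, φ (T.leaf i) = T'.leaf i) ∧
    (∀ a b : T.V, T.w s(a, b) = T'.w s(φ a, φ b))

/-- `T'` is obtained from `T` by the `k`-IO operation on the edge `{a, b}`:
the edge divides the leaf set into two parts each of cardinality `< k`; it is
contracted (via the quotient map `φ`) and `w{a,b}/k` is added to the weight of
every twig (i.e. to every pendant edge). -/
def IOStepOn (k : ℕ) (T T' : WTree n) (a b : T.V) : Prop :=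
  T.G.Adj a b ∧
  (T.sideLeaves s(a, b) a).ncard < k ∧ (T.sideLeaves s(a, b) b).ncard < k ∧
  ∃ φ : T.V → T'.V,
    Function.Surjective φ ∧ φ a = φ b ∧
    (∀ x y : T.V, φ x = φ y → x = y ∨ s(x, y) = s(a, b)) ∧
    (∀ i : Fin n, φ (T.leaf i) = T'.leaf i) ∧
    (∀ u v : T'.V, T'.G.Adj u v ↔
      ∃ x y : T.V, φ x = u ∧ φ y = v ∧ T.G.Adj x y ∧ s(x, y) ≠ s(a, b)) ∧
    (∀ x y : T.V, T.G.Adj x y → s(x, y) ≠ s(a, b) →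
      ((∃ i : Fin n, T.leaf i = x ∨ T.leaf i = y) →
        T'.w s(φ x, φ y) = T.w s(x, y) + T.w s(a, b) / k) ∧
      (¬ (∃ i : Fin n, T.leaf i = x ∨ T.leaf i = y) →
        T'.w s(φ x, φ y) = T.w s(x, y)))

/-- `T'` is obtained from `T` by a `k`-IO operation. -/
def IOStep (k : ℕ) (T T' : WTree n) : Prop := ∃ a b : T.V, IOStepOn k T T' a b

/-- `T'` is obtained from `T` by a `k`-OI operation (the inverse of a `k`-IO operation). -/
def OIStep (k : ℕ) (T T' : WTree n) : Prop := IOStep k T' T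

/-- `T'` is obtained from `T` by inserting an internal edge of weight `0`
(the inverse of contracting it). -/
def InsertZeroStep (T T' : WTree n) : Prop :=
  ∃ a b : T'.V, T'.G.Adj a b ∧ ¬ T'.IsTwigEdge s(a, b) ∧ T'.w s(a, b) = 0 ∧
    ∃ φ : T'.V → T.V,
      Function.Surjective φ ∧ φ a = φ b ∧
      (∀ x y : T'.V, φ x = φ y → x = y ∨ s(x, y) = s(a, b)) ∧
      (∀ i : Fin n, φ (T'.leaf i) = T.leaf i) ∧
      (∀ u v : T.V, T.G.Adj u v ↔
        ∃ x y : T'.V, φ x = u ∧ φ y = v ∧ T'.G.Adj x y ∧ s(x, y) ≠ s(a, b)) ∧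
      (∀ x y : T'.V, T'.G.Adj x y → s(x, y) ≠ s(a, b) → T.w s(φ x, φ y) = T'.w s(x, y))

/-- Replace the weight function of `T`. -/
def reweight (T : WTree n) (w' : Sym2 T.V → ℝ)
    (h : ∀ e, e ∉ T.G.edgeSet → w' e = 0) : WTree n :=
  { T with w := w', wSupport := h }

end WTree

namespace WTree

variable {n : ℕ}

noncomputable instance instFintypeV (T : WTree n) : Fintype T.V := T.fintypeV

variable (T : WTree n)

lemma exists_isPath (x y : T.V) : ∃ p : T.G.Walk x y, p.IsPath := by
  classical
  obtain ⟨w⟩ := T.isTree.isConnected.preconnected x y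
  exact ⟨w.toPath, w.toPath.2⟩

lemma path_unique {x y : T.V} {p q : T.G.Walk x y} (hp : p.IsPath) (hq : q.IsPath) :
    p = q :=
  congrArg Subtype.val (T.isTree.IsAcyclic.path_unique ⟨p, hp⟩ ⟨q, hq⟩)

lemma mem_pathEdges_iff {x y : T.V} {e : Sym2 T.V} :
    e ∈ T.pathEdges x y ↔ ¬ (T.G.deleteEdges {e}).Reachable x y := by
  classical
  constructor
  · rintro ⟨p, hp, hep⟩ hreach
    obtain ⟨W⟩ := hreach
    have hWe : ∀ f ∈ W.edges, f ∈ T.G.edgeSet := by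
      intro f hf
      have := W.edges_subset_edgeSet hf
      rw [SimpleGraph.edgeSet_deleteEdges] at this
      exact this.1
    have heW' : e ∉ (W.transfer T.G hWe).edges := by
      rw [SimpleGraph.Walk.edges_transfer]
      intro hf
      have := W.edges_subset_edgeSet hf
      rw [SimpleGraph.edgeSet_deleteEdges] at this
      exact this.2 rfl
    have hup := T.path_unique hp ((W.transfer T.G hWe).toPath.2)
    rw [hup] at hep
    exact heW' (SimpleGraph.Walk.edges_toPath_subset _ hep)
  · intro h
    by_contra he
    apply h
    obtain ⟨p, hp⟩ := T.exists_isPath x y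
    have hpe : ∀ f ∈ p.edges, f ∈ (T.G.deleteEdges {e}).edgeSet := by
      intro f hf
      rw [SimpleGraph.edgeSet_deleteEdges]
      refine ⟨p.edges_subset_edgeSet hf, ?_⟩
      intro hfe
      rw [Set.mem_singleton_iff] at hfe
      subst hfe
      exact he ⟨p, hp, hf⟩
    exact ⟨p.transfer _ hpe⟩

lemma not_reachable_delete {a b : T.V} (hab : T.G.Adj a b) :
    ¬ (T.G.deleteEdges {s(a, b)}).Reachable a b := by
  have hbr := SimpleGraph.isAcyclic_iff_forall_adj_isBridge.mp T.isTree.IsAcyclic hab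
  rw [SimpleGraph.isBridge_iff] at hbr
  exact hbr

lemma reachable_delete_or {a b : T.V} (hab : T.G.Adj a b) (x : T.V) :
    (T.G.deleteEdges {s(a, b)}).Reachable x a ∨
      (T.G.deleteEdges {s(a, b)}).Reachable x b := by
  classical
  obtain ⟨p, hp⟩ := T.exists_isPath x a
  by_cases he : s(a, b) ∈ p.edges
  · right
    have hb : b ∈ p.support := p.snd_mem_support_of_mem_edges he
    have hspec := p.take_spec hb
    have her : s(a, b) ∉ (p.takeUntil b hb).edges := by
      intro her
      have ha1 : a ∈ (p.takeUntil b hb).support :=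
        SimpleGraph.Walk.fst_mem_support_of_mem_edges _ her
      have hnd := hp.support_nodup
      rw [← hspec, SimpleGraph.Walk.support_append] at hnd
      have ha2 : a ∈ (p.dropUntil b hb).support.tail := by
        have ham := (p.dropUntil b hb).end_mem_support
        rw [SimpleGraph.Walk.support_eq_cons] at ham
        rcases List.mem_cons.mp ham with h1 | h1
        · exact absurd h1 hab.ne
        · exact h1
      exact (List.disjoint_of_nodup_append hnd) ha1 ha2
    refine ⟨(p.takeUntil b hb).transfer _ ?_⟩
    intro f hf
    rw [SimpleGraph.edgeSet_deleteEdges]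
    refine ⟨(p.takeUntil b hb).edges_subset_edgeSet hf, ?_⟩
    intro hfe
    rw [Set.mem_singleton_iff] at hfe
    subst hfe
    exact her hf
  · left
    refine ⟨p.transfer _ ?_⟩
    intro f hf
    rw [SimpleGraph.edgeSet_deleteEdges]
    refine ⟨p.edges_subset_edgeSet hf, ?_⟩
    intro hfe
    rw [Set.mem_singleton_iff] at hfe
    subst hfe
    exact he hf

lemma exists_pendNbr (i : Fin n) : ∃ c, T.G.neighborSet (T.leaf i) = {c} :=
  Set.ncard_eq_one.mp ((T.leafSpec (T.leaf i)).mpr ⟨i, rfl⟩)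

/-- The unique neighbour of the leaf `i`. -/
noncomputable def pendNbr (i : Fin n) : T.V := (T.exists_pendNbr i).choose

lemma pendNbr_spec (i : Fin n) : T.G.neighborSet (T.leaf i) = {T.pendNbr i} :=
  (T.exists_pendNbr i).choose_spec

lemma adj_pendNbr (i : Fin n) : T.G.Adj (T.leaf i) (T.pendNbr i) := by
  have : T.pendNbr i ∈ T.G.neighborSet (T.leaf i) := by
    rw [T.pendNbr_spec i]; exact Set.mem_singleton _
  exact this

/-- The pendant edge at the leaf `i`. -/
noncomputable def pend (i : Fin n) : Sym2 T.V := s(T.leaf i, T.pendNbr i)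

lemma pend_mem_edgeSet (i : Fin n) : T.pend i ∈ T.G.edgeSet := T.adj_pendNbr i

lemma eq_pendNbr_of_adj {i : Fin n} {v : T.V} (h : T.G.Adj (T.leaf i) v) :
    v = T.pendNbr i := by
  have : v ∈ T.G.neighborSet (T.leaf i) := h
  rw [T.pendNbr_spec i] at this
  exact this

lemma not_reachable_leaf {i : Fin n} {x : T.V} (hx : x ≠ T.leaf i) :
    ¬ (T.G.deleteEdges {T.pend i}).Reachable x (T.leaf i) := by
  intro h
  obtain ⟨W⟩ := h.symm
  cases W with
  | nil => exact hx rfl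
  | @cons _ v _ h' W' =>
    rw [SimpleGraph.deleteEdges_adj] at h'
    have hv := T.eq_pendNbr_of_adj h'.1
    subst hv
    exact h'.2 rfl

lemma mem_sideLeaves_iff {a : T.V} {e : Sym2 T.V} {i : Fin n} :
    i ∈ T.sideLeaves e a ↔ (T.G.deleteEdges {e}).Reachable (T.leaf i) a := by
  rw [sideLeaves, Set.mem_setOf_eq, T.mem_pathEdges_iff, not_not]

lemma pend_injective (hn : 3 ≤ n) : Function.Injective T.pend := by
  classical
  intro i j hij
  by_contra hne
  rw [pend, pend, Sym2.eq_iff] at hij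
  rcases hij with ⟨h1, _⟩ | ⟨h1, h2⟩
  · exact hne (T.leafInj h1)
  -- leaf i = pendNbr j and pendNbr i = leaf j
  have hji : j ∈ Finset.univ.erase i :=
    Finset.mem_erase.mpr ⟨fun h => hne h.symm, Finset.mem_univ j⟩
  have hcard : 1 ≤ ((Finset.univ.erase i).erase j).card := by
    rw [Finset.card_erase_of_mem hji, Finset.card_erase_of_mem (Finset.mem_univ i),
      Finset.card_univ, Fintype.card_fin]
    omega
  obtain ⟨m, hm⟩ := Finset.card_pos.mp (show 0 < ((Finset.univ.erase i).erase j).card by omega)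
  have hmi : m ≠ i := by
    intro h; subst h
    exact (Finset.mem_erase.mp (Finset.mem_erase.mp hm).2).1 rfl
  have hmj : m ≠ j := (Finset.mem_erase.mp hm).1
  have hkey : ∀ (x : T.V) (p : T.G.Walk (T.leaf i) x), p.IsPath →
      x = T.leaf i ∨ x = T.leaf j := by
    intro x p hp
    cases p with
    | nil => exact Or.inl rfl
    | @cons _ v _ h' q =>
      have hv : v = T.pendNbr i := T.eq_pendNbr_of_adj h'
      cases q with
      | nil => exact Or.inr (by rw [hv, h2])
      | @cons _ v' _ h'' q' =>
        exfalso
        have hv' : v' = T.pendNbr j := by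
          apply T.eq_pendNbr_of_adj
          rw [← h2, ← hv]
          exact h''
        have hstart : T.leaf i ∈ q'.support := by
          rw [h1, ← hv']; exact q'.start_mem_support
        have hnd := hp.support_nodup
        rw [SimpleGraph.Walk.support_cons, SimpleGraph.Walk.support_cons] at hnd
        exact (List.nodup_cons.mp hnd).1 (List.mem_cons_of_mem _ hstart)
  obtain ⟨p, hp⟩ := T.exists_isPath (T.leaf i) (T.leaf m)
  rcases hkey _ p hp with h | h
  · exact hmi (T.leafInj h)
  · exact hmj (T.leafInj h)

lemma pend_mem_subtree_iff {I : Finset (Fin n)} (hI : 2 ≤ I.card) (i : Fin n) :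
    T.pend i ∈ T.subtreeEdges ↑I ↔ i ∈ I := by
  constructor
  · rintro ⟨j, hj, m, hm, hpath⟩
    rw [T.mem_pathEdges_iff] at hpath
    by_contra hiI
    have hji : j ≠ i := fun h => hiI (h ▸ hj)
    have hmi : m ≠ i := fun h => hiI (h ▸ hm)
    apply hpath
    have hj' := T.reachable_delete_or (T.adj_pendNbr i) (T.leaf j)
    have hm' := T.reachable_delete_or (T.adj_pendNbr i) (T.leaf m)
    rw [show s(T.leaf i, T.pendNbr i) = T.pend i from rfl] at hj' hm'
    rcases hj' with h | hjr
    · exact absurd h (T.not_reachable_leaf (T.leafInj.ne hji))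
    rcases hm' with h | hmr
    · exact absurd h (T.not_reachable_leaf (T.leafInj.ne hmi))
    exact hjr.trans hmr.symm
  · intro hi
    obtain ⟨j, hj, hji⟩ := Finset.exists_mem_ne (s := I) (by omega) i
    refine ⟨i, hi, j, hj, ?_⟩
    rw [T.mem_pathEdges_iff]
    intro h
    exact T.not_reachable_leaf (T.leafInj.ne hji) h.symm

lemma bad_mem_subtree {k : ℕ} {a b : T.V} (hab : T.G.Adj a b)
    (hA : (T.sideLeaves s(a, b) a).ncard < k) (hB : (T.sideLeaves s(a, b) b).ncard < k)
    {I : Finset (Fin n)} (hI : I.card = k) : s(a, b) ∈ T.subtreeEdges ↑I := by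
  have hex : ∀ (S : Set (Fin n)), S.ncard < k → ∃ i ∈ I, i ∉ S := by
    intro S hS
    by_contra h
    push_neg at h
    have hsub : (↑I : Set (Fin n)) ⊆ S := fun x hx => h x hx
    have := Set.ncard_le_ncard hsub (Set.toFinite S)
    rw [Set.ncard_coe_finset, hI] at this
    omega
  obtain ⟨i, hiI, hiB⟩ := hex _ hB
  obtain ⟨j, hjI, hjA⟩ := hex _ hA
  have hiA : i ∈ T.sideLeaves s(a, b) a := by
    rw [T.mem_sideLeaves_iff]
    rcases T.reachable_delete_or hab (T.leaf i) with h | h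
    · exact h
    · exact absurd ((T.mem_sideLeaves_iff).mpr h) hiB
  have hjB : j ∈ T.sideLeaves s(a, b) b := by
    rw [T.mem_sideLeaves_iff]
    rcases T.reachable_delete_or hab (T.leaf j) with h | h
    · exact absurd ((T.mem_sideLeaves_iff).mpr h) hjA
    · exact h
  refine ⟨i, hiI, j, hjI, ?_⟩
  have hiA' := (T.mem_sideLeaves_iff).mp hiA
  have hjB' := (T.mem_sideLeaves_iff).mp hjB
  rw [T.mem_pathEdges_iff]
  intro hij
  exact T.not_reachable_delete hab (hiA'.symm.trans (hij.trans hjB'))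

lemma side_all_of_pend {k : ℕ} (hk : k ≤ n - 1) {a b : T.V} (hab : T.G.Adj a b)
    {i : Fin n} (ha : a = T.leaf i) (hpend : T.pend i = s(a, b)) :
    n - 1 ≤ (T.sideLeaves s(a, b) b).ncard := by
  have hall : ∀ j : Fin n, j ≠ i → j ∈ T.sideLeaves s(a, b) b := by
    intro j hji
    rw [T.mem_sideLeaves_iff]
    rcases T.reachable_delete_or hab (T.leaf j) with h | h
    · rw [← hpend, ha] at h
      exact absurd h (T.not_reachable_leaf (T.leafInj.ne hji))
    · exact h
  have hsub : ↑(Finset.univ.erase i) ⊆ T.sideLeaves s(a, b) b := by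
    intro j hj
    simp only [Finset.coe_erase, Set.mem_diff, Set.mem_singleton_iff] at hj
    exact hall j hj.2
  have h1 := Set.ncard_le_ncard hsub (Set.toFinite _)
  rw [Set.ncard_coe_finset, Finset.card_erase_of_mem (Finset.mem_univ i),
    Finset.card_univ, Fintype.card_fin] at h1
  exact h1

end WTree

namespace WTree

variable {n : ℕ}

open Classical in
lemma key (T : WTree n) (k : ℕ) (h3 : 3 ≤ k) (hk : k ≤ n - 1)
    {a b : T.V} (hab : T.G.Adj a b)
    (hA : (T.sideLeaves s(a, b) a).ncard < k) (hB : (T.sideLeaves s(a, b) b).ncard < k)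
    (δ : ℝ) :
    ∃ T' : WTree n, (∀ I : Finset (Fin n), I.card = k → T'.D I = T.D I) ∧
      T'.Dtot = T.Dtot + δ * ((n : ℝ) / k - 1) := by
  have hn4 : 4 ≤ n := by omega
  have hkR : (k : ℝ) ≠ 0 := Nat.cast_ne_zero.mpr (by omega)
  have hpinj : Function.Injective T.pend := T.pend_injective (by omega)
  set c : ℝ := δ / k with hc
  set w' : Sym2 T.V → ℝ := fun e =>
    T.w e + (if e = s(a, b) then -δ else 0) + (if e ∈ Set.range T.pend then c else 0)
    with hw'
  have hsupp : ∀ e, e ∉ T.G.edgeSet → w' e = 0 := by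
    intro e he
    have h1 : e ≠ s(a, b) := fun h => he (h ▸ hab)
    have h2 : e ∉ Set.range T.pend := by
      rintro ⟨i, rfl⟩
      exact he (T.pend_mem_edgeSet i)
    simp only [hw', if_neg h1, if_neg h2, T.wSupport e he, add_zero]
  refine ⟨T.reweight w' hsupp, ?_, ?_⟩
  · -- D values preserved
    intro I hI
    have hfin : (T.subtreeEdges ↑I).Finite := Set.toFinite _
    have hDT' : (T.reweight w' hsupp).D I = ∑ e ∈ hfin.toFinset, w' e := by
      show ∑ᶠ e ∈ T.subtreeEdges ↑I, w' e = _
      exact finsum_mem_eq_finite_toFinset_sum _ hfin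
    have hDT : T.D I = ∑ e ∈ hfin.toFinset, T.w e := by
      show ∑ᶠ e ∈ T.subtreeEdges ↑I, T.w e = _
      exact finsum_mem_eq_finite_toFinset_sum _ hfin
    rw [hDT', hDT]
    simp only [hw']
    rw [Finset.sum_add_distrib, Finset.sum_add_distrib]
    have h1 : ∑ e ∈ hfin.toFinset, (if e = s(a, b) then -δ else 0) = -δ := by
      rw [Finset.sum_ite_eq' hfin.toFinset (s(a, b)) (fun _ => -δ), if_pos]
      rw [Set.Finite.mem_toFinset]
      exact T.bad_mem_subtree hab hA hB hI
    have hfilter : hfin.toFinset.filter (fun e => e ∈ Set.range T.pend)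
        = I.image T.pend := by
      ext e
      simp only [Finset.mem_filter, Set.Finite.mem_toFinset, Finset.mem_image,
        Set.mem_range]
      constructor
      · rintro ⟨heS, i, rfl⟩
        exact ⟨i, (T.pend_mem_subtree_iff (by omega) i).mp heS, rfl⟩
      · rintro ⟨i, hi, rfl⟩
        exact ⟨(T.pend_mem_subtree_iff (by omega) i).mpr hi, i, rfl⟩
    have h2 : ∑ e ∈ hfin.toFinset, (if e ∈ Set.range T.pend then c else 0)
        = (k : ℝ) * c := by
      rw [← Finset.sum_filter, hfilter, Finset.sum_const,
        Finset.card_image_of_injective _ hpinj, hI, nsmul_eq_mul]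
    rw [h1, h2]
    have h3 : (k : ℝ) * c = δ := by
      rw [hc]; field_simp
    rw [h3]; ring
  · -- Dtot formula
    have hfin : (T.G.edgeSet).Finite := Set.toFinite _
    have hDT' : (T.reweight w' hsupp).Dtot = ∑ e ∈ hfin.toFinset, w' e := by
      show ∑ᶠ e ∈ T.G.edgeSet, w' e = _
      exact finsum_mem_eq_finite_toFinset_sum _ hfin
    have hDT : T.Dtot = ∑ e ∈ hfin.toFinset, T.w e := by
      show ∑ᶠ e ∈ T.G.edgeSet, T.w e = _
      exact finsum_mem_eq_finite_toFinset_sum _ hfin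
    rw [hDT', hDT]
    simp only [hw']
    rw [Finset.sum_add_distrib, Finset.sum_add_distrib]
    have h1 : ∑ e ∈ hfin.toFinset, (if e = s(a, b) then -δ else 0) = -δ := by
      rw [Finset.sum_ite_eq' hfin.toFinset (s(a, b)) (fun _ => -δ), if_pos]
      rw [Set.Finite.mem_toFinset]
      exact hab
    have hfilter : hfin.toFinset.filter (fun e => e ∈ Set.range T.pend)
        = Finset.univ.image T.pend := by
      ext e
      simp only [Finset.mem_filter, Set.Finite.mem_toFinset, Finset.mem_image,
        Set.mem_range, Finset.mem_univ, true_and]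
      constructor
      · rintro ⟨_, i, rfl⟩
        exact ⟨i, rfl⟩
      · rintro ⟨i, rfl⟩
        exact ⟨T.pend_mem_edgeSet i, i, rfl⟩
    have h2 : ∑ e ∈ hfin.toFinset, (if e ∈ Set.range T.pend then c else 0)
        = (n : ℝ) * c := by
      rw [← Finset.sum_filter, hfilter, Finset.sum_const,
        Finset.card_image_of_injective _ hpinj, Finset.card_univ, Fintype.card_fin,
        nsmul_eq_mul]
    rw [h1, h2, hc]
    field_simp
    ring

end WTree


/-- let `3 ≤ k ≤ n-1`, let `{D_I}` be an l-treelike family of real numbers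
and let `U` be the set of weighted trees with leaf set `[n]` realizing the family. If `U`
contains a tree that is not a pseudostar of kind `(n,k)`, then the infimum of the total
weights over `U` is `-∞` and the supremum is `+∞`. -/
theorem statement13 (n k : ℕ) (h3 : 3 ≤ k) (hk : k ≤ n - 1)
    (D₀ : Finset (Fin n) → ℝ)
    (hD : ∃ T : WTree n, T.Realizes k D₀ ∧ ¬ T.IsPseudostar k) :
    (∀ M : ℝ, ∃ T : WTree n, T.Realizes k D₀ ∧ T.Dtot < M) ∧
    (∀ M : ℝ, ∃ T : WTree n, T.Realizes k D₀ ∧ M < T.Dtot) := by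
  obtain ⟨T, hreal, hps⟩ := hD
  rw [WTree.IsPseudostar] at hps
  push_neg at hps
  obtain ⟨a, b, hab, hA, hB⟩ := hps
  have hn4 : 4 ≤ n := by omega
  have hkpos : (0 : ℝ) < (k : ℝ) := by
    have : 0 < k := by omega
    exact_mod_cast this
  have hc0 : (0 : ℝ) < (n : ℝ) / k - 1 := by
    rw [sub_pos, lt_div_iff₀ hkpos, one_mul]
    exact_mod_cast (by omega : k < n)
  constructor <;> intro M
  · obtain ⟨T', hD', hDtot⟩ :=
      T.key k h3 hk hab hA hB ((M - 1 - T.Dtot) / ((n : ℝ) / k - 1))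
    refine ⟨T', fun I hI => (hD' I hI).trans (hreal I hI), ?_⟩
    rw [hDtot, div_mul_cancel₀ _ (ne_of_gt hc0)]
    linarith
  · obtain ⟨T', hD', hDtot⟩ :=
      T.key k h3 hk hab hA hB ((M + 1 - T.Dtot) / ((n : ℝ) / k - 1))
    refine ⟨T', fun I hI => (hD' I hI).trans (hreal I hI), ?_⟩
    rw [hDtot, div_mul_cancel₀ _ (ne_of_gt hc0)]
    linarith
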